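/- The quaternionic polynomial P(q) = q²·(1/2) + q·i + j has zero set Z_P = {-i - ij} and its derivative P'(q) = q + i has zero set {-i}; consequently Z_{P'} is not contained in the convex hull of Z_P, so the naive Gauss-Lucas theorem fails for quaternionic polynomials. -/

import Mathlib

open Quaternion Polynomial

/-- Evaluation of a quaternionic polynomial with coefficients written on the right. -/
noncomputable def qeval (P : Polynomial ℍ[ℝ]) (q : ℍ[ℝ]) : ℍ[ℝ] :=
  P.sum fun n a => q ^ n * a

lemma qeval_add' (p q : Polynomial ℍ[ℝ]) (r : ℍ[ℝ]) :
    qeval (p + q) r = qeval p r + qeval q r := by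
  unfold qeval
  exact Polynomial.sum_add_index p q _ (fun n => mul_zero _) (fun n a b => mul_add _ _ _)

lemma qeval_monomial' (n : ℕ) (a r : ℍ[ℝ]) :
    qeval (Polynomial.monomial n a) r = r ^ n * a := by
  unfold qeval
  exact Polynomial.sum_monomial_index a _ (mul_zero _)

lemma qeval_P' (a b : ℍ[ℝ]) (q : ℍ[ℝ]) :
    qeval (X ^ 2 * C ((2 : ℍ[ℝ])⁻¹) + X * C a + C b) q
    = q ^ 2 * (2:ℍ[ℝ])⁻¹ + q * a + b := by
  rw [X_pow_mul_C, C_mul_X_pow_eq_monomial,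
    show (X * C a : Polynomial ℍ[ℝ]) = monomial 1 a by
      rw [X_mul_C, ← C_mul_X_pow_eq_monomial, pow_one],
    show (C b : Polynomial ℍ[ℝ]) = monomial 0 b from
      (C_mul_X_pow_eq_monomial (n := 0)).symm.trans (by simp)]
  rw [qeval_add', qeval_add', qeval_monomial', qeval_monomial', qeval_monomial']
  simp

lemma two_ne_zero_q : (2:ℍ[ℝ]) ≠ 0 := by
  intro h
  have := congrArg QuaternionAlgebra.re h
  rw [show ((2:ℍ[ℝ]) = ((2:ℕ):ℍ[ℝ])) by norm_num, Quaternion.re_natCast] at this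
  norm_num at this

lemma deriv_P' (a b : ℍ[ℝ]) :
    derivative (X ^ 2 * C ((2 : ℍ[ℝ])⁻¹) + X * C a + C b) = X + C a := by
  simp [derivative_mul]
  rw [one_add_one_eq_two, ← C_ofNat, ← mul_assoc, ← C_mul, inv_mul_cancel₀ two_ne_zero_q, C_1, one_mul]

def qmk (a b c d : ℝ) : ℍ[ℝ] := ⟨a, b, c, d⟩

lemma two_inv_q : (2:ℍ[ℝ])⁻¹ = qmk (1/2) 0 0 0 := by
  have h : (2:ℍ[ℝ]) * qmk (1/2) 0 0 0 = 1 := by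
    rw [show (2:ℍ[ℝ]) = qmk 2 0 0 0 from by ext <;> rfl]
    have e : ∀ a b c d : ℝ, (qmk a b c d).re = a ∧ (qmk a b c d).imI = b ∧
        (qmk a b c d).imJ = c ∧ (qmk a b c d).imK = d := fun _ _ _ _ => ⟨rfl, rfl, rfl, rfl⟩
    ext <;> simp [Quaternion.re_mul, Quaternion.imI_mul, Quaternion.imJ_mul, Quaternion.imK_mul, e]
  exact inv_eq_of_mul_eq_one_right h

lemma sys' (a b c d : ℝ)
    (h1 : (a * a - b * b - c * c - d * d) * (1 / 2) + -b = 0)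
    (h2 : (a * b + b * a + c * d - d * c) * (1 / 2) + a = 0)
    (h3 : (a * c - b * d + c * a + d * b) * (1 / 2) + d + 1 = 0)
    (h4 : (a * d + b * c - c * b + d * a) * (1 / 2) + -c = 0) :
    a = 0 ∧ b = -1 ∧ c = 0 ∧ d = -1 := by
  have h2' : a * (b + 1) = 0 := by linarith
  rcases mul_eq_zero.mp h2' with ha | hb
  · subst ha
    have hc : c = 0 := by linarith
    subst hc
    have hd : d = -1 := by linarith
    subst hd
    have hb : b = -1 := by nlinarith [sq_nonneg (b + 1)]
    exact ⟨rfl, hb, rfl, rfl⟩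
  · have hb : b = -1 := by linarith
    subst hb
    have hc : c = a * d := by linarith
    have h3' : a * (a * d) + d + 1 = 0 := by linear_combination h3 - a * hc
    have h5 : (a * a + 1) * (d * d - 1) = 0 := by linear_combination (-2) * h1 - (c + a * d) * hc
    have hd2 : d * d = 1 := by
      have hpos : a * a + 1 > 0 := by nlinarith [sq_nonneg a]
      rcases mul_eq_zero.mp h5 with h | h
      · exact absurd h (ne_of_gt hpos)
      · linarith
    rcases mul_self_eq_one_iff.mp hd2 with hd | hd
    · exfalso; rw [hd] at h3'; nlinarith [sq_nonneg a]
    · subst hd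
      have ha : a * a = 0 := by linear_combination -h3'
      have ha0 : a = 0 := by nlinarith [sq_nonneg a]
      subst ha0
      refine ⟨rfl, rfl, by simpa using hc, rfl⟩

lemma key_root (i j k : ℍ[ℝ])
    (hi : i = ⟨0, 1, 0, 0⟩) (hj : j = ⟨0, 0, 1, 0⟩) (hk : k = ⟨0, 0, 0, 1⟩) (q : ℍ[ℝ]) :
    q ^ 2 * (2:ℍ[ℝ])⁻¹ + q * i + j = 0 ↔ q = -i - k := by
  obtain ⟨ir, ii, ij, ik⟩ : i.re = 0 ∧ i.imI = 1 ∧ i.imJ = 0 ∧ i.imK = 0 := by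
    subst hi; exact ⟨rfl, rfl, rfl, rfl⟩
  obtain ⟨jr, ji, jj, jk⟩ : j.re = 0 ∧ j.imI = 0 ∧ j.imJ = 1 ∧ j.imK = 0 := by
    subst hj; exact ⟨rfl, rfl, rfl, rfl⟩
  obtain ⟨kr, ki, kj, kk⟩ : k.re = 0 ∧ k.imI = 0 ∧ k.imJ = 0 ∧ k.imK = 1 := by
    subst hk; exact ⟨rfl, rfl, rfl, rfl⟩
  obtain ⟨tr, ti, tj, tk⟩ : (qmk (1/2) 0 0 0).re = 1/2 ∧ (qmk (1/2) 0 0 0).imI = 0 ∧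
      (qmk (1/2) 0 0 0).imJ = 0 ∧ (qmk (1/2) 0 0 0).imK = 0 := ⟨rfl, rfl, rfl, rfl⟩
  rw [pow_two, two_inv_q]
  simp only [Quaternion.ext_iff, Quaternion.re_add, Quaternion.imI_add, Quaternion.imJ_add,
    Quaternion.imK_add, Quaternion.re_mul, Quaternion.imI_mul, Quaternion.imJ_mul,
    Quaternion.imK_mul, Quaternion.re_zero, Quaternion.imI_zero, Quaternion.imJ_zero,
    Quaternion.imK_zero, Quaternion.re_sub, Quaternion.imI_sub, Quaternion.imJ_sub,
    Quaternion.imK_sub, Quaternion.re_neg, Quaternion.imI_neg, Quaternion.imJ_neg,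
    Quaternion.imK_neg, ir, ii, ij, ik, jr, ji, jj, jk, kr, ki, kj, kk, tr, ti, tj, tk]
  generalize q.re = a
  generalize q.imI = b
  generalize q.imJ = c
  generalize q.imK = d
  norm_num
  constructor
  · rintro ⟨h1, h2, h3, h4⟩
    exact sys' a b c d (by linarith) (by linarith) (by linarith) (by linarith)
  · rintro ⟨rfl, rfl, rfl, rfl⟩
    norm_num

theorem gauss_lucas_stmt13 (i j k : ℍ[ℝ])
    (hi : i = ⟨0, 1, 0, 0⟩) (hj : j = ⟨0, 0, 1, 0⟩) (hk : k = ⟨0, 0, 0, 1⟩)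
    (P : Polynomial ℍ[ℝ]) (hP : P = X ^ 2 * C ((2 : ℍ[ℝ])⁻¹) + X * C i + C j) :
    {q : ℍ[ℝ] | qeval P q = 0} = {-i - k} ∧
    {q : ℍ[ℝ] | qeval (derivative P) q = 0} = {-i} ∧
    ¬ {q : ℍ[ℝ] | qeval (derivative P) q = 0} ⊆
        convexHull ℝ {q : ℍ[ℝ] | qeval P q = 0} := by
  have hZ : {q : ℍ[ℝ] | qeval P q = 0} = {-i - k} := by
    ext q
    simp only [Set.mem_setOf_eq, Set.mem_singleton_iff, hP, qeval_P']
    exact key_root i j k hi hj hk q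
  have hD : {q : ℍ[ℝ] | qeval (derivative P) q = 0} = {-i} := by
    ext q
    simp only [Set.mem_setOf_eq, Set.mem_singleton_iff, hP, deriv_P']
    rw [show (X + C i : Polynomial ℍ[ℝ]) = monomial 1 1 + monomial 0 i by
      rw [← C_mul_X_pow_eq_monomial, ← C_mul_X_pow_eq_monomial]; simp]
    rw [qeval_add', qeval_monomial', qeval_monomial']
    simp only [pow_one, pow_zero, mul_one, one_mul]
    constructor
    · exact fun h => eq_neg_of_add_eq_zero_left h
    · rintro rfl; exact neg_add_cancel i
  refine ⟨hZ, hD, ?_⟩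
  rw [hZ, hD, convexHull_singleton]
  intro h
  have h2 : -i = -i - k := h rfl
  have hk0 : k = 0 := by
    have := sub_eq_self.mp h2.symm
    exact this
  rw [hk] at hk0
  have := congrArg QuaternionAlgebra.imK hk0
  simp at this
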